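/- Let α ∈ (0,1), δ ∈ (0,1], and c ∈ [0,1]. Let Ĉ_n be a prediction-interval algorithm satisfying (1−cαδ)-MC, and define Ĉ'_n as follows: at a test point x, independently of x and of the training data, with probability (1−α)/(1−cα) set Ĉ'_n(x) = Ĉ_n(x), and otherwise set Ĉ'_n(x) = ∅. Then Ĉ'_n satisfies (1−α,δ)-CC. -/

import Mathlib

open MeasureTheory
open scoped ENNReal

noncomputable section

/-- A data point: a feature vector in `ℝ^d` together with a real response. -/
abbrev Pt (d : ℕ) : Type := (Fin d → ℝ) × ℝ

/-- A prediction-interval algorithm: maps the training data, auxiliary randomness, and a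
feature point to a subset of `ℝ`. -/
abbrev PredAlg (d n : ℕ) (Ω : Type) : Type :=
  (Fin n → Pt d) → Ω → (Fin d → ℝ) → Set ℝ

/-- Joint law of `n+1` i.i.d. data points from `P` together with independent auxiliary
randomness drawn from `μΩ`. -/
def joint (d n : ℕ) (P : Measure (Pt d)) {Ω : Type} [MeasurableSpace Ω] (μΩ : Measure Ω)
    [SFinite μΩ] : Measure ((Fin (n + 1) → Pt d) × Ω) :=
  (Measure.pi fun _ : Fin (n + 1) => P).prod μΩ

/-- The coverage event `Y_{n+1} ∈ Ĉ_n(X_{n+1})`, where the first `n` data points are the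
training data and the last one is the test point. -/
def covEvent {d n : ℕ} {Ω : Type} (C : PredAlg d n Ω) : Set ((Fin (n + 1) → Pt d) × Ω) :=
  {q | (q.1 (Fin.last n)).2 ∈ C (fun i => q.1 i.castSucc) q.2 (q.1 (Fin.last n)).1}

/-- The event `X_{n+1} ∈ 𝒳`. -/
def testEvent (d n : ℕ) (Ω : Type) (𝒳 : Set (Fin d → ℝ)) : Set ((Fin (n + 1) → Pt d) × Ω) :=
  {q | (q.1 (Fin.last n)).1 ∈ 𝒳}

/-- Distribution-free marginal coverage at level `t` (`(1-β)`-MC means `MC _ _ _ _ (1-β)`):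
for every distribution `P`, the probability of coverage is at least `t`. -/
def MC (d n : ℕ) {Ω : Type} [MeasurableSpace Ω] (μΩ : Measure Ω) [SFinite μΩ]
    (C : PredAlg d n Ω) (t : ℝ) : Prop :=
  ∀ P : Measure (Pt d), IsProbabilityMeasure P →
    ENNReal.ofReal t ≤ joint d n P μΩ (covEvent C)

/-- Distribution-free approximate conditional coverage at level `1 - α` and tolerance `δ`:
for every distribution `P` and every measurable `𝒳` with `P_X(𝒳) ≥ δ`,
`P(Y_{n+1} ∈ Ĉ_n(X_{n+1}) ∧ X_{n+1} ∈ 𝒳) ≥ (1-α) ⬝ P(X_{n+1} ∈ 𝒳)`, i.e. the conditional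
coverage probability given `X_{n+1} ∈ 𝒳` is at least `1 - α`. -/
def ACC (d n : ℕ) {Ω : Type} [MeasurableSpace Ω] (μΩ : Measure Ω) [SFinite μΩ]
    (C : PredAlg d n Ω) (α δ : ℝ) : Prop :=
  ∀ P : Measure (Pt d), IsProbabilityMeasure P →
    ∀ 𝒳 : Set (Fin d → ℝ), MeasurableSet 𝒳 → ENNReal.ofReal δ ≤ P {q | q.1 ∈ 𝒳} →
      ENNReal.ofReal (1 - α) * joint d n P μΩ (testEvent d n Ω 𝒳) ≤
        joint d n P μΩ (covEvent C ∩ testEvent d n Ω 𝒳)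


/-- **Lemma 2: randomized reduction from marginal coverage.** If `Ĉ_n` satisfies
`(1 - cαδ)`-MC and `Ĉ'_n(x)` equals `Ĉ_n(x)` with probability `(1-α)/(1-cα)` (independently
of `x` and of the training data, here encoded by an independent coin `b : Bool` with
`ζ({true}) = (1-α)/(1-cα)`) and `∅` otherwise, then `Ĉ'_n` satisfies `(1-α,δ)`-CC. -/
theorem randomized_mc_implies_approx_cc (d n : ℕ) (Ω : Type) [MeasurableSpace Ω]
    (μΩ : Measure Ω) [IsProbabilityMeasure μΩ] (α δ c : ℝ)
    (hα : α ∈ Set.Ioo (0 : ℝ) 1) (hδ : δ ∈ Set.Ioc (0 : ℝ) 1) (hc : c ∈ Set.Icc (0 : ℝ) 1)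
    (C : PredAlg d n Ω)
    (hC : MeasurableSet {p : ((Fin n → Pt d) × Ω × (Fin d → ℝ)) × ℝ |
      p.2 ∈ C p.1.1 p.1.2.1 p.1.2.2})
    (hMC : MC d n μΩ C (1 - c * α * δ))
    (ζ : Measure Bool) [IsProbabilityMeasure ζ]
    (hζ : ζ {true} = ENNReal.ofReal ((1 - α) / (1 - c * α))) :
    ACC d n (μΩ.prod ζ)
      (fun td p x => if p.2 = true then C td p.1 x else (∅ : Set ℝ)) α δ := by
  intro P hP 𝒳 hX hPX
  -- notation
  set μP : Measure (Fin (n + 1) → Pt d) := Measure.pi fun _ : Fin (n + 1) => P with hμP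
  set A : Set ((Fin (n + 1) → Pt d) × Ω) := covEvent C with hA
  set B : Set ((Fin (n + 1) → Pt d) × Ω) := testEvent d n Ω 𝒳 with hB
  set S₀ : Set (Fin (n + 1) → Pt d) := {f | (f (Fin.last n)).1 ∈ 𝒳} with hS₀
  haveI : IsProbabilityMeasure μP := by rw [hμP]; infer_instance
  haveI : IsProbabilityMeasure (joint d n P μΩ) := by unfold joint; infer_instance
  -- measurability of events
  have hmS₀ : MeasurableSet S₀ :=
    (measurable_fst.comp (measurable_pi_apply (Fin.last n))) hX
  have hmB : MeasurableSet B := by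
    have : B = (fun q : (Fin (n + 1) → Pt d) × Ω => q.1) ⁻¹' S₀ := rfl
    rw [this]; exact measurable_fst hmS₀
  have hmA : MeasurableSet A := by
    have hmap : Measurable (fun q : (Fin (n + 1) → Pt d) × Ω =>
        (((fun i : Fin n => q.1 i.castSucc), q.2, (q.1 (Fin.last n)).1),
          (q.1 (Fin.last n)).2)) := by fun_prop
    exact hmap hC
  -- events for the randomized algorithm
  set C' : PredAlg d n (Ω × Bool) :=
    (fun td p x => if p.2 = true then C td p.1 x else (∅ : Set ℝ)) with hC'
  have hset1 : covEvent C' ∩ testEvent d n (Ω × Bool) 𝒳 =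
      MeasurableEquiv.prodAssoc '' ((A ∩ B) ×ˢ ({true} : Set Bool)) := by
    ext q
    simp only [Set.mem_image, Set.mem_prod, Set.mem_inter_iff, Set.mem_singleton_iff,
      MeasurableEquiv.prodAssoc, MeasurableEquiv.coe_mk, Equiv.prodAssoc_apply]
    constructor
    · rintro ⟨hcov, htest⟩
      refine ⟨((q.1, q.2.1), q.2.2), ⟨⟨?_, htest⟩, ?_⟩, ?_⟩
      · by_cases hb : q.2.2 = true
        · simpa [covEvent, hC', hb, hA] using hcov
        · simp only [covEvent, hC', Set.mem_setOf_eq, hb, if_false] at hcov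
          exact absurd hcov (Set.notMem_empty _)
      · by_cases hb : q.2.2 = true
        · exact hb
        · simp only [covEvent, hC', Set.mem_setOf_eq, hb, if_false] at hcov
          exact absurd hcov (Set.notMem_empty _)
      · rfl
    · rintro ⟨⟨⟨p, ω⟩, b⟩, ⟨⟨⟨hcov, htest⟩, hb⟩, rfl⟩⟩
      refine ⟨?_, htest⟩
      show (p (Fin.last n)).2 ∈
        (if b = true then C (fun i => p i.castSucc) ω (p (Fin.last n)).1 else ∅)
      rw [if_pos hb]
      exact hcov
  -- the joint measure of the randomized coverage event
  have hmp := measurePreserving_prodAssoc μP μΩ ζ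
  have hCov : joint d n P (μΩ.prod ζ) (covEvent C' ∩ testEvent d n (Ω × Bool) 𝒳) =
      joint d n P μΩ (A ∩ B) * ζ {true} := by
    unfold joint
    have hmi : MeasurableSet (MeasurableEquiv.prodAssoc ''
        ((A ∩ B) ×ˢ ({true} : Set Bool))) :=
      MeasurableEquiv.prodAssoc.measurableSet_image.2
        ((hmA.inter hmB).prod (measurableSet_singleton true))
    rw [hset1, ← hmp.measure_preimage hmi.nullMeasurableSet,
      MeasurableEquiv.preimage_image]
    exact Measure.prod_prod _ _
  -- the joint measure of the test event(s)
  have hTest' : joint d n P (μΩ.prod ζ) (testEvent d n (Ω × Bool) 𝒳) = μP S₀ := by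
    unfold joint
    have : testEvent d n (Ω × Bool) 𝒳 = S₀ ×ˢ (Set.univ : Set (Ω × Bool)) := by
      ext q; simp [testEvent, hS₀]
    rw [this, Measure.prod_prod, measure_univ, mul_one]
  have hTest : joint d n P μΩ B = μP S₀ := by
    unfold joint
    have : B = S₀ ×ˢ (Set.univ : Set Ω) := by ext q; simp [hB, testEvent, hS₀]
    rw [this, Measure.prod_prod, measure_univ, mul_one]
  -- P_X(𝒳) = μP S₀
  have hS₀P : μP S₀ = P {q : Pt d | q.1 ∈ 𝒳} := by
    have : S₀ = Function.eval (Fin.last n) ⁻¹' {q : Pt d | q.1 ∈ 𝒳} := rfl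
    rw [hμP, this, Set.eval_preimage, Measure.pi_pi]
    rw [Finset.prod_eq_single (Fin.last n)]
    · simp
    · intro j _ hj; simp [Function.update_of_ne hj]
    · simp
  -- real-valued quantities
  set T : ℝ≥0∞ := μP S₀ with hT
  set W : ℝ≥0∞ := joint d n P μΩ (A ∩ B) with hW
  have hTne : T ≠ ⊤ := (measure_lt_top _ _).ne
  have hWne : W ≠ ⊤ := (measure_lt_top _ _).ne
  have hT1 : T ≤ 1 := prob_le_one
  have hW1 : W ≤ 1 := prob_le_one
  -- key inequality in ℝ≥0∞ : 1 - cαδ ≤ W + (1 - T)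
  have hkey : ENNReal.ofReal (1 - c * α * δ) ≤ W + (1 - T) := by
    calc ENNReal.ofReal (1 - c * α * δ) ≤ joint d n P μΩ A := hMC P hP
    _ ≤ joint d n P μΩ (A ∩ B) + joint d n P μΩ (A \ B) := measure_le_inter_add_diff _ _ _
    _ ≤ W + joint d n P μΩ Bᶜ := by
        gcongr
        exact Set.diff_subset_compl _ _
    _ = W + (1 - T) := by rw [prob_compl_eq_one_sub hmB, hTest]
  -- pass to real numbers
  set t : ℝ := T.toReal with ht
  set w : ℝ := W.toReal with hw
  have ht0 : 0 ≤ t := ENNReal.toReal_nonneg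
  have hw0 : 0 ≤ w := ENNReal.toReal_nonneg
  have ht1 : t ≤ 1 := by
    rw [ht, ← ENNReal.toReal_one]; exact ENNReal.toReal_mono (by simp) hT1
  have hδt : δ ≤ t := by
    have : ENNReal.ofReal δ ≤ T := by rw [hS₀P]; exact hPX
    rw [ht]
    calc δ = (ENNReal.ofReal δ).toReal := (ENNReal.toReal_ofReal hδ.1.le).symm
    _ ≤ T.toReal := ENNReal.toReal_mono hTne this
  have hkeyR : 1 - c * α * δ ≤ w + (1 - t) := by
    have h1 : (W + (1 - T)).toReal = w + (1 - t) := by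
      rw [ENNReal.toReal_add hWne (by simp [ENNReal.sub_ne_top])]
      congr 1
      rw [ENNReal.toReal_sub_of_le hT1 (by simp)]
      simp [ht]
    calc 1 - c * α * δ ≤ (ENNReal.ofReal (1 - c * α * δ)).toReal := by
          rcases le_or_gt (1 - c * α * δ) 0 with h | h
          · simp [ENNReal.ofReal_eq_zero.2 h]; linarith [ENNReal.toReal_nonneg
              (a := ENNReal.ofReal (1 - c * α * δ))]
          · rw [ENNReal.toReal_ofReal h.le]
    _ ≤ (W + (1 - T)).toReal := ENNReal.toReal_mono
          (by simp [hWne, ENNReal.sub_ne_top, ENNReal.add_ne_top]) hkey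
    _ = w + (1 - t) := h1
  -- the real inequality
  have hcα : c * α < 1 := by
    nlinarith [mul_nonneg (sub_nonneg.2 hc.2) hα.1.le, hα.2]
  have hcαne : (1 - c * α) ≠ 0 := by linarith
  have hdiv : (0:ℝ) ≤ (1 - α) / (1 - c * α) :=
    div_nonneg (by linarith [hα.2]) (by linarith)
  have hreal : (1 - α) * t ≤ (1 - α) / (1 - c * α) * w := by
    have h1 : (1 - c * α) * t ≤ w := by
      nlinarith [mul_nonneg (mul_nonneg hc.1 hα.1.le) (sub_nonneg.2 hδt)]
    have h2 : (1 - α) * t = (1 - α) / (1 - c * α) * ((1 - c * α) * t) := by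
      rw [← mul_assoc, div_mul_cancel₀ _ hcαne]
    rw [h2]
    nlinarith [hdiv]
  -- conclude
  rw [hCov, hTest', hζ]
  calc ENNReal.ofReal (1 - α) * T = ENNReal.ofReal ((1 - α) * t) := by
        rw [ENNReal.ofReal_mul (by linarith [hα.2]), ht, ENNReal.ofReal_toReal hTne]
  _ ≤ ENNReal.ofReal ((1 - α) / (1 - c * α) * w) := ENNReal.ofReal_le_ofReal hreal
  _ = W * ENNReal.ofReal ((1 - α) / (1 - c * α)) := by
        rw [ENNReal.ofReal_mul hdiv, hw, ENNReal.ofReal_toReal hWne, mul_comm]
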